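/- arXiv:1308.1511 — 2 statements merged into one kernel-verified Lean document; each statement's English description precedes it below -/
import Mathlib

section
/- Let {|k⟩} and {|x_l⟩} be two orthonormal bases of ℂ^d with overlaps c_{kl} := |⟨k|x_l⟩|², and let c := max_{k,l} c_{kl}. Let ρ_{AB} be a density matrix on ℂ^d ⊗ ℂ^d with marginal ρ_B = Tr_A(ρ_{AB}). Then the dephased-twice operator ∑_{k,l} (|x_l⟩⟨x_l| |k⟩⟨k| ⊗ I) ρ_{AB} (|k⟩⟨k| |x_l⟩⟨x_l| ⊗ I) = ∑_{k,l} c_{kl} |x_l⟩⟨x_l| ⊗ Tr_A[(|k⟩⟨k|⊗I)ρ_{AB}] satisfies the operator inequality ≤ c·(I ⊗ ρ_B). -/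
open Matrix Kronecker ComplexOrder

private lemma sum_kron' {d : ℕ} {ι : Type*} (s : Finset ι) (A : ι → Matrix (Fin d) (Fin d) ℂ)
    (C : Matrix (Fin d) (Fin d) ℂ) :
    (∑ i ∈ s, A i) ⊗ₖ C = ∑ i ∈ s, A i ⊗ₖ C := by
  ext ⟨i, a⟩ ⟨j, b⟩
  simp [kroneckerMap_apply, Matrix.sum_apply, Finset.sum_mul]

private lemma kron_sum' {d : ℕ} {ι : Type*} (s : Finset ι) (A : Matrix (Fin d) (Fin d) ℂ)
    (C : ι → Matrix (Fin d) (Fin d) ℂ) :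
    A ⊗ₖ (∑ i ∈ s, C i) = ∑ i ∈ s, A ⊗ₖ C i := by
  ext ⟨i, a⟩ ⟨j, b⟩
  simp [kroneckerMap_apply, Matrix.sum_apply, Finset.mul_sum]

private lemma kron_conjTranspose' {d : ℕ} (A B : Matrix (Fin d) (Fin d) ℂ) :
    (A ⊗ₖ B)ᴴ = Aᴴ ⊗ₖ Bᴴ := by
  ext ⟨i, a⟩ ⟨j, b⟩
  simp [kroneckerMap_apply, conjTranspose_apply, mul_comm]

private lemma kron_psd' {d : ℕ} {A B : Matrix (Fin d) (Fin d) ℂ} (hA : A.PosSemidef)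
    (hB : B.PosSemidef) : (A ⊗ₖ B).PosSemidef := by
  exact hA.kronecker hB

private lemma smul_psd' {n : Type*} [Fintype n] {M : Matrix n n ℂ} (r : ℝ) (hr : 0 ≤ r)
    (hM : M.PosSemidef) : ((r : ℂ) • M).PosSemidef := by
  constructor
  · rw [IsHermitian, conjTranspose_smul, hM.1]
    norm_num
  · intro y
    exact (hM.smul (a := (r : ℂ)) (by exact_mod_cast hr)).2 y

private lemma vmv_psd' {d : ℕ} (u : Fin d → ℂ) :
    (Matrix.vecMulVec u (star u)).PosSemidef := by
  have h : Matrix.vecMulVec u (star u) =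
      (Matrix.of fun (_ : Unit) j => star (u j))ᴴ *
        (Matrix.of fun (_ : Unit) j => star (u j)) := by
    ext i j
    simp [Matrix.mul_apply, vecMulVec_apply]
  rw [h]
  exact Matrix.posSemidef_conjTranspose_mul_self _

private lemma sum_psd' {n ι : Type*} [Fintype n] (s : Finset ι) (f : ι → Matrix n n ℂ)
    (h : ∀ i ∈ s, (f i).PosSemidef) : (∑ i ∈ s, f i).PosSemidef :=
  Finset.sum_induction f _ (fun _ _ ha hb => ha.add hb) Matrix.PosSemidef.zero h

/-- Dephasing system `A` of a bipartite state sequentially in the standard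
basis and then in the basis `{x l}` yields an operator bounded above, in the
Loewner order, by `c (I ⊗ ρ_B)` where `c = max_{k,l} |⟨k|x_l⟩|²`. -/
theorem dephased_twice_le (d : ℕ) (hd : 0 < d)
    (x : Fin d → (Fin d → ℂ))
    (hx : ∀ l l', ∑ i, star (x l i) * x l' i = if l = l' then 1 else 0)
    (ckl : Fin d → Fin d → ℝ)
    (hckl : ∀ k l, ckl k l = ‖x l k‖ ^ 2)
    (c : ℝ)
    (hc : IsGreatest (Set.range fun p : Fin d × Fin d => ckl p.1 p.2) c)
    (ρAB : Matrix (Fin d × Fin d) (Fin d × Fin d) ℂ)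
    (hρAB : ρAB.PosSemidef) (htr : ρAB.trace = 1)
    (ρB : Matrix (Fin d) (Fin d) ℂ)
    (hρB : ρB = Matrix.of fun j j' => ∑ i, ρAB (i, j) (i, j'))
    (B : Fin d → Matrix (Fin d) (Fin d) ℂ)
    (hB : ∀ k, B k = Matrix.of fun j j' => ρAB (k, j) (k, j')) :
    (∑ k, ∑ l, ((Matrix.vecMulVec (x l) (star (x l)) *
          Matrix.single k k (1 : ℂ)) ⊗ₖ (1 : Matrix (Fin d) (Fin d) ℂ)) *
          ρAB *
          ((Matrix.single k k (1 : ℂ) *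
            Matrix.vecMulVec (x l) (star (x l))) ⊗ₖ (1 : Matrix (Fin d) (Fin d) ℂ)) =
        ∑ k, ∑ l, ((ckl k l : ℝ) : ℂ) •
          (Matrix.vecMulVec (x l) (star (x l)) ⊗ₖ B k)) ∧
      ((c : ℂ) • ((1 : Matrix (Fin d) (Fin d) ℂ) ⊗ₖ ρB) -
        ∑ k, ∑ l, ((ckl k l : ℝ) : ℂ) •
          (Matrix.vecMulVec (x l) (star (x l)) ⊗ₖ B k)).PosSemidef := by
  -- `B k` is positive semidefinite (a principal "block" of `ρAB`)
  have hBpsd : ∀ k, (B k).PosSemidef := by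
    intro k
    have h : B k = ρAB.submatrix (fun a => (k, a)) (fun a => (k, a)) := by
      ext a b
      simp [hB]
    rw [h]
    exact hρAB.submatrix _
  constructor
  · -- the dephased-twice operator computed explicitly
    refine Finset.sum_congr rfl fun k _ => Finset.sum_congr rfl fun l _ => ?_
    have hck : ((ckl k l : ℝ) : ℂ) = star (x l k) * x l k := by
      rw [hckl]
      rw [← Complex.normSq_eq_norm_sq, Complex.normSq_eq_conj_mul_self]
      rfl
    have hM : (Matrix.vecMulVec (x l) (star (x l)) * Matrix.single k k (1 : ℂ)) =
        Matrix.of fun i p => if p = k then x l i * star (x l k) else 0 := by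
      ext i p
      simp [Matrix.mul_apply, Matrix.single, vecMulVec_apply, eq_comm, ite_and]
    have hN : (Matrix.single k k (1 : ℂ) * Matrix.vecMulVec (x l) (star (x l))) =
        Matrix.of fun q j => if q = k then x l k * star (x l j) else 0 := by
      ext q j
      simp [Matrix.mul_apply, Matrix.single, vecMulVec_apply, eq_comm, ite_and]
    rw [hM, hN]
    ext ⟨i, a⟩ ⟨j, b⟩
    simp [Matrix.mul_apply, kroneckerMap_apply, Fintype.sum_prod_type, vecMulVec_apply,
      Matrix.one_apply, hB, hck, ite_mul, mul_ite]
    ring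
  · -- completeness of the basis `x`
    set U : Matrix (Fin d) (Fin d) ℂ := Matrix.of fun l i => x l i with hU
    have hUU : U * Uᴴ = 1 := by
      ext l l'
      have h := congrArg star (hx l l')
      simp only [star_sum, star_mul', star_star, apply_ite (star : ℂ → ℂ), star_one, star_zero] at h
      rw [Matrix.mul_apply]
      simpa [hU, Matrix.one_apply, mul_comm] using h
    have hUU' : Uᴴ * U = 1 := mul_eq_one_comm.mp hUU
    have h1 : (∑ l, Matrix.vecMulVec (x l) (star (x l))) =
        (1 : Matrix (Fin d) (Fin d) ℂ) := by
      ext i j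
      have h := congrFun (congrFun hUU' j) i
      rw [Matrix.mul_apply] at h
      simp only [Matrix.conjTranspose_apply, hU, Matrix.of_apply] at h
      simpa [Matrix.sum_apply, vecMulVec_apply, Matrix.one_apply, eq_comm, mul_comm] using h
    have h2 : ρB = ∑ k, B k := by
      ext a b
      simp [hρB, hB, Matrix.sum_apply]
    have hdiff : (c : ℂ) • ((1 : Matrix (Fin d) (Fin d) ℂ) ⊗ₖ ρB) -
        ∑ k, ∑ l, ((ckl k l : ℝ) : ℂ) •
          (Matrix.vecMulVec (x l) (star (x l)) ⊗ₖ B k) =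
        ∑ k, ∑ l, ((c - ckl k l : ℝ) : ℂ) •
          (Matrix.vecMulVec (x l) (star (x l)) ⊗ₖ B k) := by
      rw [← h1, h2, sum_kron']
      simp only [kron_sum', Finset.smul_sum]
      rw [Finset.sum_comm, ← Finset.sum_sub_distrib]
      refine Finset.sum_congr rfl fun k _ => ?_
      rw [← Finset.sum_sub_distrib]
      refine Finset.sum_congr rfl fun l _ => ?_
      rw [← sub_smul]
      norm_cast
    rw [hdiff]
    refine sum_psd' _ _ fun k _ => sum_psd' _ _ fun l _ => ?_
    refine smul_psd' _ ?_ (kron_psd' (vmv_psd' _) (hBpsd k))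
    have hle : ckl k l ≤ c := hc.2 ⟨(k, l), rfl⟩
    linarith
end

section
/- Let |φ₀⟩ = (1/√d)∑_k |k⟩|k⟩ and let σ_Z = ∑_k ω^k|k⟩⟨k|, σ̃_X = ∑_k ω^k |x_k⟩⟨x_k| for an orthonormal basis {|x_l⟩} of ℂ^d, with ω = e^{2πi/d}. Then the equal-probability ensemble average of the encoded states equals (1/d²)∑_{m,n=0}^{d-1} (σ̃_X^m σ_Z^n ⊗ I)|φ₀⟩⟨φ₀|(σ̃_X^m σ_Z^n ⊗ I)† = ∑_{k,l} (c_{kl}/d) |x_l⟩⟨x_l| ⊗ |k⟩⟨k|, where c_{kl} = |⟨k|x_l⟩|². In particular, its von Neumann entropy equals the Shannon entropy H({c_{kl}/d}). -/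
open Matrix Kronecker
open Polynomial

/-- Von Neumann entropy (base 2) of a Hermitian matrix, via its eigenvalues. -/
noncomputable def vnEntropy {n : Type*} [Fintype n] [DecidableEq n]
    (ρ : Matrix n n ℂ) (hρ : ρ.IsHermitian) : ℝ :=
  ∑ i, -(hρ.eigenvalues i * Real.logb 2 (hρ.eigenvalues i))

/-- Shannon entropy (base 2) of a finitely indexed family of reals. -/
noncomputable def shannonEntropy {ι : Type*} [Fintype ι] (p : ι → ℝ) : ℝ :=
  ∑ i, -(p i * Real.logb 2 (p i))

lemma my_charpoly_conj {n : Type*} [Fintype n] [DecidableEq n]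
    (U V A : Matrix n n ℂ) (h1 : U * V = 1) :
    (U * A * V).charpoly = A.charpoly := by
  have h1' : U.map (C : ℂ →+* ℂ[X]) * V.map C = 1 := by
    rw [← Matrix.map_mul, h1]; simp
  have hc : charmatrix (U * A * V) =
      U.map (C : ℂ →+* ℂ[X]) * charmatrix A * V.map C := by
    rw [charmatrix, charmatrix]
    have hm : (C.mapMatrix (U * A * V) : Matrix n n ℂ[X]) =
        U.map C * C.mapMatrix A * V.map C := by
      simp [RingHom.mapMatrix_apply, Matrix.map_mul]
    rw [hm, mul_sub, sub_mul]
    congr 1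
    rw [← Matrix.scalar_commute (X : ℂ[X]) (fun a => Commute.all _ _), mul_assoc, h1', mul_one]
  have hdet : (U.map (C : ℂ →+* ℂ[X])).det * (V.map (C : ℂ →+* ℂ[X])).det = 1 := by
    rw [← Matrix.det_mul, h1', Matrix.det_one]
  rw [Matrix.charpoly, Matrix.charpoly, hc, Matrix.det_mul, Matrix.det_mul]
  ring_nf
  rw [mul_comm, ← mul_assoc, mul_comm (Matrix.det (V.map _)), hdet, one_mul]

lemma my_charpoly_diagonal {n : Type*} [Fintype n] [DecidableEq n]
    (v : n → ℂ) : (Matrix.diagonal v).charpoly = ∏ i, (X - C (v i)) := by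
  have h : charmatrix (Matrix.diagonal v) = Matrix.diagonal (fun i => X - C (v i)) := by
    rw [charmatrix]
    have : (C.mapMatrix (Matrix.diagonal v) : Matrix n n ℂ[X]) =
        Matrix.diagonal (fun i => C (v i)) := by
      simp [RingHom.mapMatrix_apply, Matrix.diagonal_map]
    rw [this, scalar_apply, Matrix.diagonal_sub]
  rw [Matrix.charpoly, h, Matrix.det_diagonal]

lemma my_sum_eq_of_prod {ι κ : Type*} [Fintype ι] [Fintype κ] (a : ι → ℂ) (b : κ → ℂ)
    (h : ∏ i, (X - C (a i)) = ∏ j, (X - C (b j))) (g : ℂ → ℝ) :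
    ∑ i, g (a i) = ∑ j, g (b j) := by
  have ha : (∏ i : ι, (X - C (a i))).roots = (Finset.univ.val.map a) := by
    rw [Finset.prod_eq_multiset_prod]
    rw [show (Multiset.map (fun i => X - C (a i)) Finset.univ.val)
        = Multiset.map (fun z => X - C z) (Finset.univ.val.map a) by rw [Multiset.map_map]; rfl]
    exact roots_multiset_prod_X_sub_C _
  have hb : (∏ j : κ, (X - C (b j))).roots = (Finset.univ.val.map b) := by
    rw [Finset.prod_eq_multiset_prod]
    rw [show (Multiset.map (fun j => X - C (b j)) Finset.univ.val)
        = Multiset.map (fun z => X - C z) (Finset.univ.val.map b) by rw [Multiset.map_map]; rfl]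
    exact roots_multiset_prod_X_sub_C _
  have hm : Finset.univ.val.map a = Finset.univ.val.map b := by
    rw [← ha, ← hb, h]
  calc ∑ i, g (a i) = ((Finset.univ.val.map a).map g).sum := by
        rw [Multiset.map_map]; rfl
    _ = ((Finset.univ.val.map b).map g).sum := by rw [hm]
    _ = ∑ j, g (b j) := by rw [Multiset.map_map]; rfl

lemma my_char_ortho (d : ℕ) (hd : 0 < d) (ω : ℂ)
    (hω : ω = Complex.exp (2 * Real.pi * Complex.I / d)) (a b : Fin d) :
    ∑ n ∈ Finset.range d, (ω ^ (a : ℕ)) ^ n * (starRingEnd ℂ) ((ω ^ (b : ℕ)) ^ n)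
      = if a = b then (d : ℂ) else 0 := by
  have hprim : IsPrimitiveRoot ω d := by
    rw [hω]; exact Complex.isPrimitiveRoot_exp d hd.ne'
  have hω0 : ω ≠ 0 := by
    rw [hω]; exact Complex.exp_ne_zero _
  have habs : ‖ω‖ = 1 := hprim.norm'_eq_one hd.ne'
  have hconj : ∀ z : ℂ, ‖z‖ = 1 → (starRingEnd ℂ) z = z⁻¹ := by
    intro z hz
    rw [Complex.inv_def, Complex.normSq_eq_norm_sq, hz]
    simp
  have hterm : ∀ n, (ω ^ (a : ℕ)) ^ n * (starRingEnd ℂ) ((ω ^ (b : ℕ)) ^ n)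
      = (ω ^ (a : ℕ) / ω ^ (b : ℕ)) ^ n := by
    intro n
    rw [hconj _ (by simp [map_pow, habs]), div_pow, div_eq_mul_inv, ← inv_pow]
  rw [Finset.sum_congr rfl (fun n _ => hterm n)]
  set ζ : ℂ := ω ^ (a : ℕ) / ω ^ (b : ℕ) with hζ
  by_cases hab : a = b
  · subst hab
    simp [hζ, div_self (pow_ne_zero _ hω0)]
  · have hζ1 : ζ ≠ 1 := by
      rw [hζ]
      intro hcon
      rw [div_eq_one_iff_eq (pow_ne_zero _ hω0)] at hcon
      exact hab (Fin.ext (hprim.pow_inj a.isLt b.isLt hcon))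
    have hζd : ζ ^ d = 1 := by
      rw [hζ, div_pow, ← pow_mul, ← pow_mul, mul_comm (a : ℕ) d, mul_comm (b : ℕ) d,
        pow_mul, pow_mul, hprim.pow_eq_one, one_pow, one_pow, div_one]
    rw [geom_sum_eq hζ1, hζd, sub_self, zero_div, if_neg hab]

lemma my_ortho_expand (d : ℕ) (hd : 0 < d) (ω : ℂ)
    (hω : ω = Complex.exp (2 * Real.pi * Complex.I / d)) (f g : Fin d → ℂ) :
    ∑ m ∈ Finset.range d,
      (∑ k : Fin d, (ω ^ (k : ℕ)) ^ m * f k) *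
        (starRingEnd ℂ) (∑ k : Fin d, (ω ^ (k : ℕ)) ^ m * g k)
    = d * ∑ k : Fin d, f k * (starRingEnd ℂ) (g k) := by
  calc ∑ m ∈ Finset.range d,
      (∑ k : Fin d, (ω ^ (k : ℕ)) ^ m * f k) *
        (starRingEnd ℂ) (∑ k : Fin d, (ω ^ (k : ℕ)) ^ m * g k)
      = ∑ m ∈ Finset.range d, ∑ k : Fin d, ∑ k' : Fin d,
          ((ω ^ (k : ℕ)) ^ m * f k) *
            ((starRingEnd ℂ) ((ω ^ (k' : ℕ)) ^ m) * (starRingEnd ℂ) (g k')) := by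
        refine Finset.sum_congr rfl fun m _ => ?_
        rw [map_sum, Finset.sum_mul_sum]
        simp only [_root_.map_mul]
    _ = ∑ k : Fin d, ∑ k' : Fin d, (f k * (starRingEnd ℂ) (g k')) *
          ∑ m ∈ Finset.range d, (ω ^ (k : ℕ)) ^ m * (starRingEnd ℂ) ((ω ^ (k' : ℕ)) ^ m) := by
        rw [Finset.sum_comm]
        refine Finset.sum_congr rfl fun k _ => ?_
        rw [Finset.sum_comm]
        refine Finset.sum_congr rfl fun k' _ => ?_
        rw [Finset.mul_sum]
        refine Finset.sum_congr rfl fun m _ => ?_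
        ring
    _ = ∑ k : Fin d, ∑ k' : Fin d, (f k * (starRingEnd ℂ) (g k')) *
          (if k = k' then (d : ℂ) else 0) := by
        simp_rw [my_char_ortho d hd ω hω]
    _ = d * ∑ k : Fin d, f k * (starRingEnd ℂ) (g k) := by
        simp only [mul_ite, mul_zero, Finset.sum_ite_eq, Finset.mem_univ, if_true]
        rw [Finset.mul_sum]
        exact Finset.sum_congr rfl fun k _ => by ring

lemma my_vecMulVec_mul {n : Type*} [Fintype n] (a b c e : n → ℂ) :
    Matrix.vecMulVec a b * Matrix.vecMulVec c e = (b ⬝ᵥ c) • Matrix.vecMulVec a e := by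
  ext i j
  simp only [Matrix.mul_apply, Matrix.vecMulVec_apply, Matrix.smul_apply, dotProduct,
    smul_eq_mul, Finset.sum_mul, Finset.mul_sum]
  exact Finset.sum_congr rfl fun k _ => by ring

lemma my_complete (d : ℕ) (x : Fin d → (Fin d → ℂ))
    (hx : ∀ l l', ∑ i, star (x l i) * x l' i = if l = l' then 1 else 0) :
    ∑ k : Fin d, Matrix.vecMulVec (x k) (star (x k)) = 1 := by
  set W : Matrix (Fin d) (Fin d) ℂ := Matrix.of (fun i k => x k i) with hW
  have h1 : Wᴴ * W = 1 := by
    ext l l'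
    simp only [Matrix.mul_apply, Matrix.conjTranspose_apply, hW, Matrix.of_apply,
      Matrix.one_apply]
    exact hx l l'
  have h2 : W * Wᴴ = 1 := mul_eq_one_comm.mp h1
  ext i i'
  rw [← h2]
  simp only [Matrix.sum_apply, Matrix.vecMulVec_apply, Matrix.mul_apply,
    Matrix.conjTranspose_apply, hW, Matrix.of_apply, Pi.star_apply]

lemma my_sigmaX_pow (d : ℕ) (ω : ℂ) (x : Fin d → (Fin d → ℂ))
    (hx : ∀ l l', ∑ i, star (x l i) * x l' i = if l = l' then 1 else 0) (m : ℕ) :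
    (∑ k : Fin d, ω ^ (k : ℕ) • Matrix.vecMulVec (x k) (star (x k))) ^ m
      = ∑ k : Fin d, (ω ^ (k : ℕ)) ^ m • Matrix.vecMulVec (x k) (star (x k)) := by
  induction m with
  | zero => simpa using (my_complete d x hx).symm
  | succ m ih =>
      rw [pow_succ, ih, Finset.sum_mul]
      refine Finset.sum_congr rfl fun k _ => ?_
      rw [Finset.mul_sum]
      have hcollapse : ∀ l : Fin d,
          ((ω ^ (k : ℕ)) ^ m • Matrix.vecMulVec (x k) (star (x k))) *
            (ω ^ (l : ℕ) • Matrix.vecMulVec (x l) (star (x l)))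
          = if l = k then ((ω ^ (k : ℕ)) ^ (m + 1)) • Matrix.vecMulVec (x k) (star (x k))
            else 0 := by
        intro l
        rw [Matrix.smul_mul, Matrix.mul_smul, my_vecMulVec_mul]
        have hdp : (star (x k)) ⬝ᵥ (x l) = if k = l then 1 else 0 := by
          simpa [dotProduct] using hx k l
        by_cases h : l = k
        · subst h
          simp [hdp, pow_succ, smul_smul, mul_comm]
        · rw [hdp, if_neg (fun hc => h hc.symm), if_neg h]
          simp
      rw [Finset.sum_congr rfl fun l _ => hcollapse l]
      simp

lemma my_conj_outer {n : Type*} [Fintype n] (K : Matrix n n ℂ) (u : n → ℂ) :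
    K * Matrix.vecMulVec u (star u) * Kᴴ
      = Matrix.vecMulVec (K *ᵥ u) (star (K *ᵥ u)) := by
  ext i j
  simp only [Matrix.mul_apply, Matrix.vecMulVec_apply, Matrix.conjTranspose_apply,
    Pi.star_apply, Matrix.mulVec, dotProduct, star_sum, star_mul',
    Finset.sum_mul, Finset.mul_sum]
  exact Finset.sum_congr rfl fun s _ => Finset.sum_congr rfl fun r _ => by ring

lemma my_kron_mulVec (d : ℕ) (A : Matrix (Fin d) (Fin d) ℂ) (c : ℂ)
    (φ₀ : Fin d × Fin d → ℂ)
    (hφ₀ : φ₀ = fun p : Fin d × Fin d => if p.1 = p.2 then c else 0)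
    (p : Fin d × Fin d) :
    ((A ⊗ₖ (1 : Matrix (Fin d) (Fin d) ℂ)) *ᵥ φ₀) p = A p.1 p.2 * c := by
  subst hφ₀
  simp only [Matrix.mulVec, dotProduct, Matrix.kroneckerMap_apply, Fintype.sum_prod_type,
    Matrix.one_apply, mul_ite, mul_one, mul_zero, ite_mul, zero_mul]
  rw [Finset.sum_comm]
  simp [Finset.sum_ite_eq]

lemma main_eq (d : ℕ) (hd : 0 < d)
    (ω : ℂ) (hω : ω = Complex.exp (2 * Real.pi * Complex.I / d))
    (x : Fin d → (Fin d → ℂ))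
    (hx : ∀ l l', ∑ i, star (x l i) * x l' i = if l = l' then 1 else 0)
    (ckl : Fin d → Fin d → ℝ) (hckl : ∀ k l, ckl k l = ‖x l k‖ ^ 2)
    (σZ σX : Matrix (Fin d) (Fin d) ℂ)
    (hZ : σZ = Matrix.diagonal (fun k : Fin d => ω ^ (k : ℕ)))
    (hX : σX = ∑ k : Fin d, ω ^ (k : ℕ) • Matrix.vecMulVec (x k) (star (x k)))
    (φ₀ : Fin d × Fin d → ℂ)
    (hφ₀ : φ₀ = fun p : Fin d × Fin d =>
      if p.1 = p.2 then ((1 / Real.sqrt d : ℝ) : ℂ) else 0)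
    (ρavg : Matrix (Fin d × Fin d) (Fin d × Fin d) ℂ)
    (hρavg : ρavg = (1 / (d ^ 2) : ℂ) •
      ∑ m ∈ Finset.range d, ∑ n ∈ Finset.range d,
        ((σX ^ m * σZ ^ n) ⊗ₖ (1 : Matrix (Fin d) (Fin d) ℂ)) *
          Matrix.vecMulVec φ₀ (star φ₀) *
          ((σX ^ m * σZ ^ n) ⊗ₖ (1 : Matrix (Fin d) (Fin d) ℂ))ᴴ)
    : ρavg = ∑ k, ∑ l, ((ckl k l / d : ℝ) : ℂ) •
        (Matrix.vecMulVec (x l) (star (x l)) ⊗ₖ Matrix.single k k (1 : ℂ)) := by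
  set c : ℂ := ((1 / Real.sqrt d : ℝ) : ℂ) with hc
  -- entries of σX^m * σZ^n
  have hA : ∀ (m n : ℕ) (i j : Fin d), (σX ^ m * σZ ^ n) i j
      = (∑ k : Fin d, (ω ^ (k : ℕ)) ^ m * (x k i * star (x k j))) * (ω ^ (j : ℕ)) ^ n := by
    intro m n i j
    rw [hX, my_sigmaX_pow d ω x hx m, hZ, Matrix.diagonal_pow, Matrix.mul_diagonal]
    congr 1
    simp only [Matrix.sum_apply, Matrix.smul_apply, Matrix.vecMulVec_apply, smul_eq_mul,
      Pi.star_apply, Pi.pow_apply]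
  have hcc : c * star c = ((1 / d : ℝ) : ℂ) := by
    rw [hc, Complex.star_def, Complex.conj_ofReal, ← Complex.ofReal_mul]
    congr 1
    rw [div_mul_div_comm, one_mul, Real.mul_self_sqrt (Nat.cast_nonneg d)]
  subst hρavg
  ext p q
  obtain ⟨i, j⟩ := p
  obtain ⟨i', j'⟩ := q
  -- rewrite LHS entry
  rw [Matrix.smul_apply, Matrix.sum_apply]
  simp only [Matrix.sum_apply, my_conj_outer, Matrix.vecMulVec_apply, Pi.star_apply,
    my_kron_mulVec d _ c φ₀ hφ₀]
  simp only [hA]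
  -- inner sum over n
  have hn : ∀ m : ℕ,
      ∑ n ∈ Finset.range d,
        ((∑ k : Fin d, (ω ^ (k : ℕ)) ^ m * (x k i * star (x k j))) * (ω ^ (j : ℕ)) ^ n * c) *
          star ((∑ k : Fin d, (ω ^ (k : ℕ)) ^ m * (x k i' * star (x k j'))) * (ω ^ (j' : ℕ)) ^ n * c)
      = ((∑ k : Fin d, (ω ^ (k : ℕ)) ^ m * (x k i * star (x k j))) *
          star (∑ k : Fin d, (ω ^ (k : ℕ)) ^ m * (x k i' * star (x k j')))) *
        ((c * star c) * (if j = j' then (d : ℂ) else 0)) := by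
    intro m
    rw [show (if j = j' then (d : ℂ) else 0)
        = ∑ n ∈ Finset.range d, (ω ^ (j : ℕ)) ^ n * (starRingEnd ℂ) ((ω ^ (j' : ℕ)) ^ n)
      from (my_char_ortho d hd ω hω j j').symm]
    rw [Finset.mul_sum, Finset.mul_sum]
    refine Finset.sum_congr rfl fun n _ => ?_
    simp only [star_mul', Complex.star_def]
    ring
  rw [Finset.sum_congr rfl fun m _ => hn m]
  rw [← Finset.sum_mul]
  have hm := my_ortho_expand d hd ω hω
    (fun k => x k i * star (x k j)) (fun k => x k i' * star (x k j'))
  simp only [Complex.star_def] at hm ⊢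
  rw [hm]
  -- now the RHS entry
  simp only [Matrix.sum_apply, Matrix.smul_apply, Matrix.kroneckerMap_apply,
    Matrix.vecMulVec_apply, Matrix.single, Matrix.of_apply, smul_eq_mul,
    Pi.star_apply]
  have hcc' : c * (starRingEnd ℂ) c = ((1 / d : ℝ) : ℂ) := by
    rw [← Complex.star_def]; exact hcc
  have hd' : (d : ℂ) ≠ 0 := Nat.cast_ne_zero.mpr hd.ne'
  by_cases hjj : j = j'
  · subst hjj
    simp only [if_true, Complex.star_def, mul_ite, mul_one, mul_zero, and_self,
      Finset.sum_ite_eq', Finset.mem_univ]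
    rw [hcc']
    rw [Finset.sum_comm]
    simp only [Finset.sum_ite_eq', Finset.mem_univ, if_true]
    rw [Finset.mul_sum, Finset.sum_mul, Finset.mul_sum]
    refine Finset.sum_congr rfl fun e _ => ?_
    have hnorm : ((ckl j e : ℝ) : ℂ) = x e j * (starRingEnd ℂ) (x e j) := by
      rw [hckl, Complex.mul_conj]
      norm_cast
      simp [Complex.normSq_eq_norm_sq]
    simp only [Complex.ofReal_div]
    rw [hnorm]
    simp only [_root_.map_mul, Complex.conj_conj]
    push_cast
    field_simp
  · simp only [if_neg hjj, mul_zero]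
    symm
    refine Finset.sum_eq_zero fun y _ => Finset.sum_eq_zero fun k _ => ?_
    have hcond : ¬(y = j ∧ y = j') := by
      rintro ⟨rfl, rfl⟩; exact hjj rfl
    rw [if_neg hcond, mul_zero, mul_zero]

/-- The equal-probability ensemble average of the Pauli-product-encoded
maximally entangled state equals `∑_{k,l} (c_{kl}/d) |x_l⟩⟨x_l| ⊗ |k⟩⟨k|`; in
particular its von Neumann entropy is the Shannon entropy `H({c_{kl}/d})`. -/
theorem ensemble_average_encoded_MES (d : ℕ) (hd : 0 < d)
    (ω : ℂ) (hω : ω = Complex.exp (2 * Real.pi * Complex.I / d))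
    (x : Fin d → (Fin d → ℂ))
    (hx : ∀ l l', ∑ i, star (x l i) * x l' i = if l = l' then 1 else 0)
    (ckl : Fin d → Fin d → ℝ) (hckl : ∀ k l, ckl k l = ‖x l k‖ ^ 2)
    (σZ σX : Matrix (Fin d) (Fin d) ℂ)
    (hZ : σZ = Matrix.diagonal (fun k : Fin d => ω ^ (k : ℕ)))
    (hX : σX = ∑ k : Fin d, ω ^ (k : ℕ) • Matrix.vecMulVec (x k) (star (x k)))
    (φ₀ : Fin d × Fin d → ℂ)
    (hφ₀ : φ₀ = fun p : Fin d × Fin d =>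
      if p.1 = p.2 then ((1 / Real.sqrt d : ℝ) : ℂ) else 0)
    (ρavg : Matrix (Fin d × Fin d) (Fin d × Fin d) ℂ)
    (hρavg : ρavg = (1 / (d ^ 2) : ℂ) •
      ∑ m ∈ Finset.range d, ∑ n ∈ Finset.range d,
        ((σX ^ m * σZ ^ n) ⊗ₖ (1 : Matrix (Fin d) (Fin d) ℂ)) *
          Matrix.vecMulVec φ₀ (star φ₀) *
          ((σX ^ m * σZ ^ n) ⊗ₖ (1 : Matrix (Fin d) (Fin d) ℂ))ᴴ)
    (hherm : ρavg.IsHermitian) :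
    ρavg = ∑ k, ∑ l, ((ckl k l / d : ℝ) : ℂ) •
        (Matrix.vecMulVec (x l) (star (x l)) ⊗ₖ Matrix.single k k (1 : ℂ)) ∧
      vnEntropy ρavg hherm =
        shannonEntropy (fun p : Fin d × Fin d => ckl p.1 p.2 / d) := by
  have part1 := main_eq d hd ω hω x hx ckl hckl σZ σX hZ hX φ₀ hφ₀ ρavg hρavg
  refine ⟨part1, ?_⟩
  -- the diagonalizing unitary
  set val : Fin d × Fin d → ℝ := fun lk => ckl lk.2 lk.1 / d with hval
  set D : Matrix (Fin d × Fin d) (Fin d × Fin d) ℂ :=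
    Matrix.diagonal (fun lk => ((val lk : ℝ) : ℂ)) with hD
  set U : Matrix (Fin d × Fin d) (Fin d × Fin d) ℂ :=
    Matrix.of (fun p q => x q.1 p.1 * (if p.2 = q.2 then 1 else 0)) with hU
  have hUU' : Uᴴ * U = 1 := by
    ext ⟨l, k⟩ ⟨l', k'⟩
    simp only [Matrix.mul_apply, Matrix.conjTranspose_apply, hU, Matrix.of_apply,
      Fintype.sum_prod_type, star_mul', mul_ite, mul_one, mul_zero, ite_mul, zero_mul,
      star_one, star_zero, Matrix.one_apply, Prod.mk.injEq]
    rw [Finset.sum_comm]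
    have hinner : ∀ y : Fin d,
        (∑ i : Fin d, if y = k' then star (if y = k then x l i else 0) * x l' i else 0)
        = if y = k' ∧ y = k then ∑ i : Fin d, star (x l i) * x l' i else 0 := by
      intro y
      by_cases h1 : y = k' <;> by_cases h2 : y = k <;> simp [h1, h2, apply_ite (starRingEnd ℂ)]
    rw [Finset.sum_congr rfl fun y _ => hinner y]
    simp only [hx]
    by_cases hkk : k = k'
    · subst hkk
      simp [Finset.sum_ite_eq', and_self]
    · have hz : ∀ y : Fin d,
          (if y = k' ∧ y = k then (if l = l' then (1:ℂ) else 0) else 0) = 0 := by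
        intro y
        rw [if_neg]
        rintro ⟨rfl, rfl⟩; exact hkk rfl
      simp [hz, hkk]
  have hUU : U * Uᴴ = 1 := mul_eq_one_comm.mp hUU'
  have hdiag : ρavg = U * D * Uᴴ := by
    rw [part1, hD]
    ext p q
    obtain ⟨i, j⟩ := p
    obtain ⟨i', j'⟩ := q
    rw [Matrix.mul_apply]
    simp only [Matrix.mul_diagonal, Matrix.conjTranspose_apply, hU, Matrix.of_apply,
      Fintype.sum_prod_type, star_mul', mul_ite, mul_one, mul_zero, ite_mul, zero_mul,
      star_one, star_zero, apply_ite (star : ℂ → ℂ), Matrix.sum_apply, Matrix.smul_apply,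
      Matrix.kroneckerMap_apply, Matrix.vecMulVec_apply, Matrix.single,
      smul_eq_mul, Pi.star_apply]
    by_cases hjj : j = j'
    · subst hjj
      simp only [and_self]
      rw [Finset.sum_comm]
      simp only [Finset.sum_ite_eq', Finset.sum_ite_eq, Finset.mem_univ, if_true]
      refine Finset.sum_congr rfl fun l _ => ?_
      simp only [hval]
      ring
    · refine Eq.trans (Finset.sum_eq_zero fun k _ => Finset.sum_eq_zero fun l _ => ?_)
        (Eq.symm (Finset.sum_eq_zero fun l _ => Finset.sum_eq_zero fun k _ => ?_))
      · rw [if_neg]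
        rintro ⟨rfl, rfl⟩; exact hjj rfl
      · by_cases h2 : j' = k
        · subst h2
          rw [if_pos rfl, if_neg hjj]
        · rw [if_neg h2]
  have hcp : ρavg.charpoly = D.charpoly := by
    rw [hdiag]
    exact my_charpoly_conj U Uᴴ D hUU
  have hU₀ : (Matrix.IsHermitian.eigenvectorUnitary hherm : Matrix (Fin d × Fin d) (Fin d × Fin d) ℂ) *
      star (Matrix.IsHermitian.eigenvectorUnitary hherm : Matrix (Fin d × Fin d) (Fin d × Fin d) ℂ) = 1 :=
    (Matrix.mem_unitaryGroup_iff).mp (Matrix.IsHermitian.eigenvectorUnitary hherm).2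
  have hcp2 : ρavg.charpoly =
      (Matrix.diagonal (fun i => ((hherm.eigenvalues i : ℝ) : ℂ))).charpoly := by
    conv_lhs => rw [hherm.spectral_theorem]
    exact my_charpoly_conj _ _ _ hU₀
  have hprod : (∏ i, (Polynomial.X - Polynomial.C ((hherm.eigenvalues i : ℝ) : ℂ)))
      = ∏ lk, (Polynomial.X - Polynomial.C ((val lk : ℝ) : ℂ)) := by
    rw [← my_charpoly_diagonal, ← my_charpoly_diagonal, ← hcp2, hcp, hD]
  have hsum := my_sum_eq_of_prod _ _ hprod (fun z => -(z.re * Real.logb 2 z.re))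
  simp only [Complex.ofReal_re] at hsum
  rw [vnEntropy, shannonEntropy]
  rw [hsum]
  exact Fintype.sum_equiv (Equiv.prodComm (Fin d) (Fin d)) _ _ (fun lk => rfl)
end
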